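/- There is no group G of order 54 acting transitively on a 27-element set V such that every element of order 2 in G fixes exactly 3 points of V and every nontrivial element of 3-power order acts freely on V. -/

import Mathlib

/-- There is no group `G` of order `54` acting transitively on a `27`-element set `V`
such that every element of order `2` fixes exactly `3` points, every nontrivial element
of `3`-power order acts freely, and every nonidentity element has order `2` or a power
of `3`. -/
theorem no_group_of_order_54 {G : Type*} [Group G] [Fintype G]
    {V : Type*} [Fintype V] [MulAction G V]
    (hG : Fintype.card G = 54) (hV : Fintype.card V = 27)
    (htrans : MulAction.IsPretransitive G V)
    (hinv : ∀ g : G, orderOf g = 2 → {v : V | g • v = v}.ncard = 3)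
    (hfree : ∀ g : G, g ≠ 1 → (∃ k : ℕ, orderOf g = 3 ^ k) → ∀ v : V, g • v ≠ v)
    (hord : ∀ g : G, g ≠ 1 → orderOf g = 2 ∨ ∃ k : ℕ, 1 ≤ k ∧ orderOf g = 3 ^ k) :
    False := by
  classical
  have hp3 : Fact (Nat.Prime 3) := ⟨by norm_num⟩
  set I : Finset G := Finset.univ.filter (fun g => orderOf g = 2) with hI
  set T : Finset (G × V) :=
    Finset.univ.filter (fun p : G × V => orderOf p.1 = 2 ∧ p.1 • p.2 = p.2) with hT
  -- Step 1: each point's fiber has exactly one involution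
  have hfiber : ∀ v : V,
      (Finset.univ.filter (fun g : G => orderOf g = 2 ∧ g • v = v)).card = 1 := by
    intro v
    have hstabcard : Nat.card (MulAction.stabilizer G v) = 2 := by
      have horb : Fintype.card (MulAction.orbit G v) = 27 := by
        rw [← hV]
        exact Fintype.card_congr
          ((Equiv.setCongr (MulAction.orbit_eq_univ G v)).trans (Equiv.Set.univ V))
      have := MulAction.card_orbit_mul_card_stabilizer_eq_card_group G v
      rw [horb, hG] at this
      have : Fintype.card (MulAction.stabilizer G v) = 2 := by omega
      simpa [Nat.card_eq_fintype_card] using this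
    set S : Finset G := (MulAction.stabilizer G v : Set G).toFinset with hS
    have hScard : S.card = 2 := by
      rw [hS, Set.toFinset_card]
      rw [← Nat.card_eq_fintype_card]
      exact hstabcard
    have hmemS : ∀ g : G, g ∈ S ↔ g • v = v := by
      intro g
      simp [hS, MulAction.mem_stabilizer_iff]
    have hFeq : Finset.univ.filter (fun g : G => orderOf g = 2 ∧ g • v = v)
        = S \ {1} := by
      ext g
      simp only [Finset.mem_filter, Finset.mem_univ, true_and, Finset.mem_sdiff,
        Finset.mem_singleton, hmemS]
      constructor
      · rintro ⟨h2, hf⟩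
        refine ⟨hf, ?_⟩
        intro h1
        rw [h1, orderOf_one] at h2
        omega
      · rintro ⟨hf, hne⟩
        refine ⟨?_, hf⟩
        rcases hord g hne with h2 | ⟨k, hk, hk3⟩
        · exact h2
        · exact absurd hf (hfree g hne ⟨k, hk3⟩ v)
    have h1S : (1 : G) ∈ S := by rw [hmemS]; simp
    rw [hFeq, Finset.card_sdiff_of_subset (by simpa using h1S), hScard]
    simp
  -- Step 2: count T by fibers over V : card T = 27
  have hT27 : T.card = 27 := by
    have := Finset.card_eq_sum_card_fiberwise
      (f := fun p : G × V => p.2) (s := T) (t := Finset.univ) (fun p _ => Finset.mem_univ _)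
    rw [this]
    have : ∀ v : V, (T.filter fun p => p.2 = v).card = 1 := by
      intro v
      rw [← hfiber v]
      apply Finset.card_bij (fun p _ => p.1)
      · rintro ⟨g, w⟩ hp
        simp only [hT, Finset.mem_filter, Finset.mem_univ, true_and] at hp ⊢
        obtain ⟨⟨h2, hf⟩, hw⟩ := hp
        subst hw
        exact ⟨h2, hf⟩
      · rintro ⟨g, w⟩ hp ⟨g', w'⟩ hp' h
        simp only [hT, Finset.mem_filter, Finset.mem_univ, true_and] at hp hp'
        simp only at h
        simp [h, hp.2, hp'.2]
      · intro g hg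
        simp only [Finset.mem_filter, Finset.mem_univ, true_and] at hg
        exact ⟨(g, v), by simp [hT, hg.1, hg.2], rfl⟩
    rw [Finset.sum_congr rfl (fun v _ => this v)]
    simp [hV]
  -- Step 3: count T by fibers over I : card T = 3 * card I
  have hT3I : T.card = 3 * I.card := by
    have := Finset.card_eq_sum_card_fiberwise
      (f := fun p : G × V => p.1) (s := T) (t := I) (by
        rintro ⟨g, v⟩ hp
        simp only [hT, Finset.mem_coe, Finset.mem_filter, Finset.mem_univ, true_and] at hp
        simp [hI, hp.1])
    rw [this]
    have : ∀ g ∈ I, (T.filter fun p => p.1 = g).card = 3 := by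
      intro g hg
      simp only [hI, Finset.mem_filter, Finset.mem_univ, true_and] at hg
      have h3 := hinv g hg
      rw [Set.ncard_eq_toFinset_card'] at h3
      rw [← h3]
      apply Finset.card_bij (fun p _ => p.2)
      · rintro ⟨g', v⟩ hp
        simp only [hT, Finset.mem_filter, Finset.mem_univ, true_and] at hp
        obtain ⟨⟨h2, hf⟩, hgg⟩ := hp
        subst hgg
        simp [hf]
      · rintro ⟨g', v⟩ hp ⟨g'', v'⟩ hp' h
        simp only [hT, Finset.mem_filter, Finset.mem_univ, true_and] at hp hp'
        simp only at h
        simp [h, hp.2, hp'.2]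
      · intro v hv
        simp only [Set.mem_toFinset, Set.mem_setOf_eq] at hv
        exact ⟨(g, v), by simp [hT, hg, hv], rfl⟩
    rw [Finset.sum_congr rfl this]
    simp [mul_comm]
  -- Step 4: unique Sylow 3-subgroup, so at least 27 involutions
  obtain ⟨P⟩ : Nonempty (Sylow 3 G) := inferInstance
  have hPcard : Nat.card P = 27 := by
    have h3 : (Nat.card G).factorization 3 = 3 := by
      rw [Nat.card_eq_fintype_card, hG]
      have h54 : (54 : ℕ) = 3 ^ 3 * 2 := by norm_num
      rw [h54, Nat.factorization_mul (by norm_num) (by norm_num),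
        Nat.Prime.factorization_pow (by norm_num)]
      have h2 : Nat.factorization 2 3 = 0 :=
        Nat.factorization_eq_zero_of_not_dvd (by norm_num)
      simp [h2]
    rw [Sylow.card_eq_multiplicity, h3]
    norm_num
  have hPindex : (P : Subgroup G).index = 2 := by
    have := (P : Subgroup G).index_mul_card
    rw [hPcard, Nat.card_eq_fintype_card, hG] at this
    omega
  have hsylow1 : Nat.card (Sylow 3 G) = 1 := by
    have h1 := card_sylow_modEq_one 3 G
    have h2 := P.card_dvd_index
    rw [hPindex] at h2
    have hle := Nat.le_of_dvd (by norm_num) h2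
    have h1' : Nat.card (Sylow 3 G) % 3 = 1 % 3 := h1
    omega
  have hsub : Subsingleton (Sylow 3 G) := (Nat.card_eq_one_iff_unique.mp hsylow1).1
  -- every non-involution lies in P
  have hIc : Iᶜ ⊆ (P : Set G).toFinset := by
    intro g hg
    simp only [hI, Finset.mem_compl, Finset.mem_filter, Finset.mem_univ, true_and] at hg
    rw [Set.mem_toFinset]
    by_cases h1 : g = 1
    · rw [h1]; exact (P : Subgroup G).one_mem
    rcases hord g h1 with h2 | ⟨k, hk, hk3⟩
    · exact absurd h2 hg
    · have hpg : IsPGroup 3 (Subgroup.zpowers g) :=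
        IsPGroup.of_card (by rw [Nat.card_zpowers, hk3])
      obtain ⟨Q, hQ⟩ := hpg.exists_le_sylow
      have : Q = P := Subsingleton.elim Q P
      exact this ▸ hQ (Subgroup.mem_zpowers g)
  have hIcard : 27 ≤ I.card := by
    have h1 : Iᶜ.card ≤ 27 := by
      calc Iᶜ.card ≤ ((P : Set G).toFinset).card := Finset.card_le_card hIc
        _ = 27 := by rw [Set.toFinset_card, ← Nat.card_eq_fintype_card]; exact hPcard
    have h2 : I.card + Iᶜ.card = 54 := by
      rw [Finset.card_add_card_compl, hG]
    omega
  omega
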